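/- There exists a subset P of the real numbers such that P is dense in ℝ, and neither the difference set P − P = {a − b : a, b ∈ P} nor the difference set Pᶜ − Pᶜ = {a − b : a, b ∈ ℝ \ P} contains a nonempty open interval of ℝ. -/

import Mathlib

/-- The difference set `A - A = {a - b : a, b ∈ A}`. -/
def diffSet (A : Set ℝ) : Set ℝ := {x | ∃ a ∈ A, ∃ b ∈ A, x = a - b}

noncomputable section AuxG

/-- A ℚ-linearly independent singleton. -/
def myBasisSet : Set ℝ := {(1 : ℝ)}

lemma myLI : LinearIndepOn ℚ id myBasisSet :=
  (linearIndepOn_singleton_iff ℚ).mpr one_ne_zero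

/-- A Hamel basis of ℝ over ℚ containing 1. -/
def myB : Module.Basis (myLI.extend (Set.subset_univ myBasisSet)) ℚ ℝ := Module.Basis.extend myLI

def oneIdx : myLI.extend (Set.subset_univ myBasisSet) :=
  ⟨1, myLI.subset_extend _ rfl⟩

/-- The ℚ-linear coordinate functional for the basis vector 1. -/
def g : ℝ →ₗ[ℚ] ℚ := myB.coord oneIdx

lemma g_one : g 1 = 1 := by
  have h : myB oneIdx = 1 := Module.Basis.extend_apply_self myLI oneIdx
  simp [g, Module.Basis.coord, ← h, Module.Basis.repr_self]

lemma g_rat (q : ℚ) : g (q : ℝ) = q := by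
  have : (q : ℝ) = q • (1 : ℝ) := by simp [Rat.smul_one_eq_cast]
  rw [this, map_smul, g_one]; simp

/-- The kernel of `g` as an additive subgroup of ℝ. -/
def kerG : AddSubgroup ℝ := (LinearMap.ker g).toAddSubgroup

lemma ker_uncountable : ¬ (kerG : Set ℝ).Countable := by
  intro hc
  have : Countable ℝ := by
    have hinj : Function.Injective (fun x : ℝ => ((g x, ⟨x - (g x : ℝ), by
        simp [kerG, LinearMap.mem_ker, map_sub, g_rat]⟩) : ℚ × (kerG : Set ℝ))) := by
      intro a b hab
      simp only [Prod.mk.injEq, Subtype.mk.injEq] at hab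
      have h1 := hab.1
      have h2 : a - (g a : ℝ) = b - (g b : ℝ) := congrArg Subtype.val hab.2
      rw [h1] at h2
      linarith
    have : Countable (kerG : Set ℝ) := hc.to_subtype
    exact Function.Injective.countable hinj
  exact (Cardinal.not_countable_real) (Set.countable_univ)

lemma ker_dense : Dense (kerG : Set ℝ) := by
  rcases kerG.dense_or_cyclic with h | ⟨a, ha⟩
  · exact h
  · exfalso
    apply ker_uncountable
    rw [ha]
    have : (AddSubgroup.closure {a} : Set ℝ) ⊆ Set.range (fun n : ℤ => n • a) := by
      intro x hx
      rw [SetLike.mem_coe, AddSubgroup.mem_closure_singleton] at hx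
      rcases hx with ⟨n, hn⟩
      exact ⟨n, hn⟩
    exact (Set.countable_range _).mono this

lemma fiber_dense (q : ℚ) {x y : ℝ} (hxy : x < y) : ∃ z ∈ Set.Ioo x y, g z = q := by
  have hne : (Set.Ioo (x - (q:ℝ)) (y - q)).Nonempty := by
    exact ⟨x - q + (y-x)/2, by constructor <;> [linarith; linarith]⟩
  obtain ⟨w, hw1, hw2⟩ := ker_dense.exists_mem_open isOpen_Ioo hne
  refine ⟨(q : ℝ) + w, ⟨by linarith [hw2.1], by linarith [hw2.2]⟩, ?_⟩
  have : g w = 0 := by simpa [kerG, LinearMap.mem_ker] using hw1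
  rw [map_add, g_rat, this, add_zero]

lemma key_parity {A : Set ℝ} (hA : ∀ a ∈ A, ∀ b ∈ A, Even ⌊g a⌋ ↔ Even ⌊g b⌋)
    {x y : ℝ} (hxy : x < y) : ¬ Set.Ioo x y ⊆ diffSet A := by
  intro hsub
  obtain ⟨z, hz, hgz⟩ := fiber_dense 1 hxy
  obtain ⟨a, ha, b, hb, hab⟩ := hsub hz
  have : g a = g b + 1 := by
    have := hgz; rw [hab, map_sub] at this; linarith
  have hf : ⌊g a⌋ = ⌊g b⌋ + 1 := by rw [this, Int.floor_add_one]
  have := hA a ha b hb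
  rw [hf, Int.even_add_one] at this
  tauto

end AuxG

theorem exists_dense_no_interval_in_diffSets :
    ∃ P : Set ℝ, Dense P ∧
      (∀ x y : ℝ, x < y → ¬ Set.Ioo x y ⊆ diffSet P) ∧
      (∀ x y : ℝ, x < y → ¬ Set.Ioo x y ⊆ diffSet Pᶜ) := by
  refine ⟨{x : ℝ | Even ⌊g x⌋}, ?_, ?_, ?_⟩
  · apply Dense.mono (s₁ := (kerG : Set ℝ)) ?_ ker_dense
    intro w hw
    have : g w = 0 := by simpa [kerG, LinearMap.mem_ker] using hw
    simp [Set.mem_setOf_eq, this]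
  · intro x y hxy
    exact key_parity (fun a ha b hb => by simp_all [Set.mem_setOf_eq]) hxy
  · intro x y hxy
    refine key_parity (fun a ha b hb => ?_) hxy
    simp only [Set.mem_compl_iff, Set.mem_setOf_eq] at ha hb
    simp [ha, hb]
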